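/- Let X ≥ 2 and let s = σ + it with θ < σ = Re s < 1 and t = Im s ≥ 2. Then |ζ(s) − ζ_X(s)| ≤ (1/(σ−θ))·( κ·X^(1−σ)/t + 2A·t/X^(σ−θ) ) ≤ ((2A+κ)/(σ−θ))·( X^(1−σ)/t + t/X^(σ−θ) ). -/

import Mathlib

open scoped BigOperators Real

open MeasureTheory Set

/-- The multiplicative norm on the Beurling generalized integers `ℕ →₀ ℕ`
generated by the primes `q i`. -/
noncomputable def bNorm (q : ℕ → ℝ) (g : ℕ →₀ ℕ) : ℝ :=
  g.prod fun i k => q i ^ k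

/-- The integer counting function `N(x)`. -/
noncomputable def bN (q : ℕ → ℝ) (x : ℝ) : ℕ :=
  {g : ℕ →₀ ℕ | bNorm q g ≤ x}.ncard

/-- The remainder `R(x) = N(x) - κ(x-1)`. -/
noncomputable def bR (q : ℕ → ℝ) (κ : ℝ) (x : ℝ) : ℝ :=
  (bN q x : ℝ) - κ * (x - 1)

/-- The Beurling zeta function, via the analytic continuation formula
`ζ(s) = κ/(s-1) + s ∫_1^∞ R(x) x^(-s-1) dx`. -/
noncomputable def bZeta (q : ℕ → ℝ) (κ : ℝ) (s : ℂ) : ℂ :=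
  (κ : ℂ) / (s - 1) + s * ∫ x in Set.Ioi (1 : ℝ), (bR q κ x : ℂ) * (x : ℂ) ^ (-s - 1)

/-- The partial sums `ζ_X(s) = ∑_{‖g‖ ≤ X} ‖g‖^{-s}`. -/
noncomputable def bZetaX (q : ℕ → ℝ) (X : ℝ) (s : ℂ) : ℂ :=
  ∑ᶠ g ∈ {g : ℕ →₀ ℕ | bNorm q g ≤ X}, (bNorm q g : ℂ) ^ (-s)

lemma one_le_bNorm (q : ℕ → ℝ) (hq : ∀ i, 1 < q i) (g : ℕ →₀ ℕ) : 1 ≤ bNorm q g := by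
  rw [bNorm, Finsupp.prod]
  have := Finset.prod_le_prod (s := g.support) (f := fun _ => (1:ℝ))
    (g := fun i => q i ^ g i) (by intros; norm_num) (fun i _ => one_le_pow₀ (hq i).le)
  simpa using this

lemma bdiff
    (q : ℕ → ℝ) (hq : ∀ i, 1 < q i)
    (hfin : ∀ x : ℝ, {g : ℕ →₀ ℕ | bNorm q g ≤ x}.Finite)
    (κ A θ : ℝ) (hA : 0 < A) (hθ0 : 0 < θ) (hθ1 : θ < 1)
    (hAxiomA : ∀ x : ℝ, 1 ≤ x → |bR q κ x| ≤ A * x ^ θ)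
    (X : ℝ) (hX : 2 ≤ X) (s : ℂ) (hs : θ < s.re) (hs1 : s.re < 1) (ht : 2 ≤ s.im) :
    bZeta q κ s - bZetaX q X s =
      (κ : ℂ) * X * (X:ℂ) ^ (-s) / (s - 1) - (bR q κ X : ℂ) * (X:ℂ) ^ (-s)
        + s * ∫ x in Set.Ioi X, (bR q κ x : ℂ) * (x : ℂ) ^ (-s - 1) := by
  have hσ0 : 0 < s.re := hθ0.trans hs
  have ht0 : (0:ℝ) < s.im := by linarith
  have hs0 : s ≠ 0 := fun h => by simp [h] at ht0
  have hs1' : s ≠ 1 := fun h => by simp [h] at ht0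
  have hX1 : (1:ℝ) < X := by linarith
  have hX0 : (0:ℝ) < X := by linarith
  have hXC : (X:ℂ) ≠ 0 := by exact_mod_cast hX0.ne'
  -- measurability of bR
  have hNmono : Monotone fun x : ℝ => (bN q x : ℝ) := by
    intro x y hxy
    have hss : {g : ℕ →₀ ℕ | bNorm q g ≤ x} ⊆ {g : ℕ →₀ ℕ | bNorm q g ≤ y} :=
      fun g hg => le_trans hg hxy
    have := Set.ncard_le_ncard hss (hfin y)
    simp only [bN]
    exact_mod_cast this
  have hRmeas : Measurable fun x : ℝ => (bR q κ x : ℂ) := by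
    apply Complex.measurable_ofReal.comp
    exact hNmono.measurable.sub (measurable_const.mul (measurable_id.sub measurable_const))
  have hcpow : ∀ r : ℂ, ContinuousOn (fun x : ℝ => (x:ℂ) ^ r) (Set.Ioi 0) := fun r x hx =>
    (Complex.continuousAt_ofReal_cpow_const x r (Or.inr (ne_of_gt hx))).continuousWithinAt
  have hcpow1 : ∀ r : ℂ, AEStronglyMeasurable (fun x : ℝ => (x:ℂ) ^ r)
      (volume.restrict (Set.Ioi 1)) := fun r =>
    ((hcpow r).mono (Set.Ioi_subset_Ioi zero_le_one)).aestronglyMeasurable measurableSet_Ioi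
  -- integrability of the R-integrand on Ioi 1
  have hbound : ∀ᵐ x ∂(volume.restrict (Set.Ioi (1:ℝ))),
      ‖(bR q κ x : ℂ) * (x:ℂ) ^ (-s - 1)‖ ≤ A * x ^ (θ - s.re - 1) := by
    filter_upwards [ae_restrict_mem measurableSet_Ioi] with x hx
    have hx0 : (0:ℝ) < x := lt_trans one_pos hx
    rw [norm_mul, Complex.norm_real, Real.norm_eq_abs,
      Complex.norm_cpow_eq_rpow_re_of_pos hx0]
    have h2 : ((-s - 1).re) = -s.re - 1 := by simp
    rw [h2]
    calc |bR q κ x| * x ^ (-s.re - 1) ≤ (A * x ^ θ) * x ^ (-s.re - 1) :=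
          mul_le_mul_of_nonneg_right (hAxiomA x hx.le) (by positivity)
      _ = A * x ^ (θ - s.re - 1) := by
          rw [mul_assoc, ← Real.rpow_add hx0]; ring_nf
  have hRint : IntegrableOn (fun x : ℝ => (bR q κ x : ℂ) * (x:ℂ) ^ (-s - 1)) (Set.Ioi 1) := by
    refine Integrable.mono' ((integrableOn_Ioi_rpow_of_lt (by linarith) one_pos).const_mul A)
      (hRmeas.aestronglyMeasurable.mul (hcpow1 _)) hbound
  -- integrability of the pure power on Ioi 1
  have hPint : IntegrableOn (fun x : ℝ => (x:ℂ) ^ (-s - 1)) (Set.Ioi 1) := by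
    refine Integrable.mono' (integrableOn_Ioi_rpow_of_lt (a := -s.re - 1) (by linarith) one_pos)
      (hcpow1 _) ?_
    filter_upwards [ae_restrict_mem measurableSet_Ioi] with x hx
    have hx0 : (0:ℝ) < x := lt_trans one_pos hx
    rw [Complex.norm_cpow_eq_rpow_re_of_pos hx0]
    simp
  -- split the integral
  have hsplit : (∫ x in Set.Ioi (1:ℝ), (bR q κ x : ℂ) * (x:ℂ) ^ (-s - 1))
      = (∫ x in Set.Ioc (1:ℝ) X, (bR q κ x : ℂ) * (x:ℂ) ^ (-s - 1))
        + ∫ x in Set.Ioi X, (bR q κ x : ℂ) * (x:ℂ) ^ (-s - 1) := by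
    rw [← Set.Ioc_union_Ioi_eq_Ioi hX1.le]
    exact setIntegral_union (Set.Ioc_disjoint_Ioi le_rfl) measurableSet_Ioi
      (hRint.mono_set (fun y hy => hy.1)) (hRint.mono_set (Set.Ioi_subset_Ioi hX1.le))
  -- interval integrability of powers on [1, X]
  have h0X : (0:ℝ) ∉ Set.uIcc (1:ℝ) X := Set.notMem_uIcc_of_lt one_pos hX0
  have hi1 : IntervalIntegrable (fun x : ℝ => (x:ℂ) ^ (-s)) volume 1 X :=
    intervalIntegral.intervalIntegrable_cpow (Or.inr h0X)
  have hi2 : IntervalIntegrable (fun x : ℝ => (x:ℂ) ^ (-s - 1)) volume 1 X :=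
    intervalIntegral.intervalIntegrable_cpow (Or.inr h0X)
  have hI1 : (∫ x in (1:ℝ)..X, (x:ℂ) ^ (-s)) = ((X:ℂ) ^ ((1:ℂ) - s) - 1) / (1 - s) := by
    rw [integral_cpow (Or.inr ⟨fun h => hs1' (by linear_combination -h), h0X⟩)]
    rw [show -s + 1 = (1:ℂ) - s by ring]
    norm_num
  have hI2 : (∫ x in (1:ℝ)..X, (x:ℂ) ^ (-s - 1)) = ((X:ℂ) ^ (-s) - 1) / (-s) := by
    rw [integral_cpow (Or.inr ⟨fun h => hs0 (by linear_combination -h), h0X⟩)]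
    rw [show -s - 1 + 1 = -s by ring]
    norm_num
  -- the partial sum via the counting function
  set S : Finset (ℕ →₀ ℕ) := (hfin X).toFinset with hS
  have hmemS : ∀ g : ℕ →₀ ℕ, g ∈ S ↔ bNorm q g ≤ X := by
    intro g; rw [hS, Set.Finite.mem_toFinset]; rfl
  have hζX : bZetaX q X s = ∑ g ∈ S, (bNorm q g : ℂ) ^ (-s) :=
    finsum_mem_eq_finite_toFinset_sum _ (hfin X)
  have hkey : ∀ g ∈ S, (bNorm q g : ℂ) ^ (-s) = (X:ℂ) ^ (-s)
      + s * ∫ x in Set.Ioc (1:ℝ) X, Set.indicator (Set.Ici (bNorm q g))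
          (fun y : ℝ => (y:ℂ) ^ (-s - 1)) x := by
    intro g hg
    set a := bNorm q g with ha
    have hg1 : 1 ≤ a := one_le_bNorm q hq g
    have haX : a ≤ X := (hmemS g).1 hg
    have ha0 : (0:ℝ) < a := lt_of_lt_of_le one_pos hg1
    have hInd : (∫ x in Set.Ioc (1:ℝ) X, Set.indicator (Set.Ici a)
        (fun y : ℝ => (y:ℂ) ^ (-s - 1)) x) = ∫ x in Set.Ioc a X, (x:ℂ) ^ (-s - 1) := by
      rw [integral_indicator measurableSet_Ici, Measure.restrict_restrict measurableSet_Ici]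
      apply setIntegral_congr_set
      apply MeasureTheory.ae_eq_set.2
      constructor
      · refine measure_mono_null (fun x hx => ?_) (measure_singleton a)
        obtain ⟨⟨hax, _, hxX⟩, h2⟩ := hx
        simp only [Set.mem_Ioc, not_and, not_le] at h2
        have hxa : ¬ a < x := fun h => absurd (h2 h) (not_lt.2 hxX)
        simp [le_antisymm (not_lt.1 hxa) hax]
      · refine measure_mono_null (fun x hx => ?_) (measure_empty (μ := volume))
        obtain ⟨⟨hax, hxX⟩, h2⟩ := hx
        exact absurd ⟨hax.le, lt_of_le_of_lt hg1 hax, hxX⟩ h2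
    have hEval : (∫ x in a..X, (x:ℂ) ^ (-s - 1)) = ((X:ℂ) ^ (-s) - (a:ℂ) ^ (-s)) / (-s) := by
      rw [integral_cpow (Or.inr ⟨fun h => hs0 (by linear_combination -h),
        Set.notMem_uIcc_of_lt ha0 hX0⟩)]
      rw [show -s - 1 + 1 = -s by ring]
    rw [hInd, ← intervalIntegral.integral_of_le haX, hEval]
    linear_combination ((X:ℂ) ^ (-s) - (a:ℂ) ^ (-s)) * (mul_inv_cancel₀ hs0)
  have hIndInt : ∀ g ∈ S, IntegrableOn (fun x : ℝ => Set.indicator (Set.Ici (bNorm q g))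
      (fun y : ℝ => (y:ℂ) ^ (-s - 1)) x) (Set.Ioc (1:ℝ) X) := by
    intro g _
    exact (hPint.mono_set (fun y hy => hy.1)).indicator measurableSet_Ici
  have hζX2 : bZetaX q X s = (bN q X : ℂ) * (X:ℂ) ^ (-s)
      + s * ∫ x in Set.Ioc (1:ℝ) X, (bN q x : ℂ) * (x:ℂ) ^ (-s - 1) := by
    rw [hζX, Finset.sum_congr rfl hkey, Finset.sum_add_distrib, Finset.sum_const,
      ← Finset.mul_sum, ← integral_finset_sum S hIndInt]
    have hcard : (S.card : ℂ) = (bN q X : ℂ) := by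
      norm_cast
      rw [bN, Set.ncard_eq_toFinset_card _ (hfin X)]
    have hptw : ∀ x ∈ Set.Ioc (1:ℝ) X,
        (∑ g ∈ S, Set.indicator (Set.Ici (bNorm q g)) (fun y : ℝ => (y:ℂ) ^ (-s - 1)) x)
          = (bN q x : ℂ) * (x:ℂ) ^ (-s - 1) := by
      intro x hx
      have : ∀ g ∈ S, Set.indicator (Set.Ici (bNorm q g)) (fun y : ℝ => (y:ℂ) ^ (-s - 1)) x
          = if bNorm q g ≤ x then (x:ℂ) ^ (-s - 1) else 0 := by
        intro g _
        simp [Set.indicator_apply, Set.mem_Ici]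
      rw [Finset.sum_congr rfl this, ← Finset.sum_filter, Finset.sum_const]
      have hfilt : S.filter (fun g => bNorm q g ≤ x) = (hfin x).toFinset := by
        ext g
        simp only [Finset.mem_filter, Set.Finite.mem_toFinset, hmemS, Set.mem_setOf_eq]
        exact ⟨fun h => h.2, fun h => ⟨le_trans h hx.2, h⟩⟩
      rw [hfilt, nsmul_eq_mul]
      congr 1
      norm_cast
      rw [bN, Set.ncard_eq_toFinset_card _ (hfin x)]
    rw [setIntegral_congr_fun measurableSet_Ioc hptw, nsmul_eq_mul, hcard]
  -- decompose N = R + κ(x-1) inside the Ioc integral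
  have hptw2 : ∀ x ∈ Set.Ioc (1:ℝ) X, (bN q x : ℂ) * (x:ℂ) ^ (-s - 1)
      = (bR q κ x : ℂ) * (x:ℂ) ^ (-s - 1) + ((κ:ℂ) * ((x:ℂ) - 1)) * (x:ℂ) ^ (-s - 1) := by
    intro x _
    have : (bN q x : ℂ) = (bR q κ x : ℂ) + (κ:ℂ) * ((x:ℂ) - 1) := by
      rw [bR]; push_cast; ring
    rw [this]; ring
  have hptw3 : ∀ x ∈ Set.Ioc (1:ℝ) X, ((κ:ℂ) * ((x:ℂ) - 1)) * (x:ℂ) ^ (-s - 1)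
      = (κ:ℂ) * ((x:ℂ) ^ (-s) - (x:ℂ) ^ (-s - 1)) := by
    intro x hx
    have hx0 : (x:ℂ) ≠ 0 := by
      exact_mod_cast (lt_trans one_pos hx.1).ne'
    have hxx : (x:ℂ) ^ (-s) = (x:ℂ) * (x:ℂ) ^ (-s - 1) := by
      have h := Complex.cpow_add (x := (x:ℂ)) 1 (-s - 1) hx0
      rw [Complex.cpow_one] at h
      rw [show (1:ℂ) + (-s - 1) = -s by ring] at h
      exact h
    rw [hxx]; ring
  have hκIntOn : IntegrableOn (fun x : ℝ => ((κ:ℂ) * ((x:ℂ) - 1)) * (x:ℂ) ^ (-s - 1))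
      (Set.Ioc (1:ℝ) X) := by
    refine IntegrableOn.congr_fun ?_ (fun x hx => (hptw3 x hx).symm) measurableSet_Ioc
    exact ((intervalIntegrable_iff_integrableOn_Ioc_of_le hX1.le).1
      ((hi1.sub hi2).const_mul (κ:ℂ)))
  have hκEval : (∫ x in Set.Ioc (1:ℝ) X, ((κ:ℂ) * ((x:ℂ) - 1)) * (x:ℂ) ^ (-s - 1))
      = (κ:ℂ) * (((X:ℂ) ^ ((1:ℂ) - s) - 1) / (1 - s) - ((X:ℂ) ^ (-s) - 1) / (-s)) := by
    rw [setIntegral_congr_fun measurableSet_Ioc hptw3,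
      ← intervalIntegral.integral_of_le hX1.le, intervalIntegral.integral_const_mul,
      intervalIntegral.integral_sub hi1 hi2, hI1, hI2]
  have hIocN : (∫ x in Set.Ioc (1:ℝ) X, (bN q x : ℂ) * (x:ℂ) ^ (-s - 1))
      = (∫ x in Set.Ioc (1:ℝ) X, (bR q κ x : ℂ) * (x:ℂ) ^ (-s - 1))
        + (κ:ℂ) * (((X:ℂ) ^ ((1:ℂ) - s) - 1) / (1 - s) - ((X:ℂ) ^ (-s) - 1) / (-s)) := by
    rw [setIntegral_congr_fun measurableSet_Ioc hptw2,
      integral_add (hRint.mono_set (fun y hy => hy.1)) hκIntOn, hκEval]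
  -- assembling everything
  have hNX : (bN q X : ℂ) = (bR q κ X : ℂ) + (κ:ℂ) * ((X:ℂ) - 1) := by
    rw [bR]; push_cast; ring
  have hX1s : (X:ℂ) ^ ((1:ℂ) - s) = (X:ℂ) * (X:ℂ) ^ (-s) := by
    rw [show (1:ℂ) - s = 1 + (-s) by ring, Complex.cpow_add _ _ hXC, Complex.cpow_one]
  rw [bZeta, hζX2, hsplit, hIocN, hNX, hX1s]
  have h1s : (1:ℂ) - s ≠ 0 := fun h => hs1' (by linear_combination -h)
  have hs1n : s - 1 ≠ 0 := sub_ne_zero.2 hs1'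
  field_simp [hs0, hs1n, h1s, neg_ne_zero.2 hs0]
  ring

theorem statement_10
    (q : ℕ → ℝ) (hq : ∀ i, 1 < q i)
    (hfin : ∀ x : ℝ, {g : ℕ →₀ ℕ | bNorm q g ≤ x}.Finite)
    (κ A θ : ℝ) (hκ : 0 < κ) (hA : 0 < A) (hθ0 : 0 < θ) (hθ1 : θ < 1)
    (hAxiomA : ∀ x : ℝ, 1 ≤ x → |bR q κ x| ≤ A * x ^ θ)
    (X : ℝ) (hX : 2 ≤ X) (s : ℂ) (hs : θ < s.re) (hs1 : s.re < 1) (ht : 2 ≤ s.im) :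
    ‖bZeta q κ s - bZetaX q X s‖ ≤
      1 / (s.re - θ) * (κ * X ^ (1 - s.re) / s.im + 2 * A * s.im / X ^ (s.re - θ)) ∧
    1 / (s.re - θ) * (κ * X ^ (1 - s.re) / s.im + 2 * A * s.im / X ^ (s.re - θ)) ≤
      (2 * A + κ) / (s.re - θ) * (X ^ (1 - s.re) / s.im + s.im / X ^ (s.re - θ)) := by
  have hσ0 : 0 < s.re := hθ0.trans hs
  have ht0 : (0:ℝ) < s.im := by linarith
  have hd : 0 < s.re - θ := sub_pos.2 hs
  have hd1 : s.re - θ < 1 := by linarith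
  have hX0 : (0:ℝ) < X := by linarith
  have hX1 : (1:ℝ) ≤ X := by linarith
  have hvpos : (0:ℝ) < X ^ (θ - s.re) := Real.rpow_pos_of_pos hX0 _
  have hvconv : (2:ℝ) * A * s.im / X ^ (s.re - θ) = 2 * A * s.im * X ^ (θ - s.re) := by
    rw [div_eq_mul_inv, ← Real.rpow_neg hX0.le]
    ring_nf
  constructor
  · rw [bdiff q hq hfin κ A θ hA hθ0 hθ1 hAxiomA X hX s hs hs1 ht]
    set P : ℂ := (X:ℂ) ^ (-s) with hPdef
    set J : ℂ := ∫ x in Set.Ioi X, (bR q κ x : ℂ) * (x:ℂ) ^ (-s - 1) with hJdef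
    have tri : ‖(κ:ℂ) * X * P / (s - 1) - (bR q κ X : ℂ) * P + s * J‖
        ≤ ‖(κ:ℂ) * X * P / (s - 1)‖ + ‖(bR q κ X : ℂ) * P‖
          + ‖s * J‖ := by
      calc ‖(κ:ℂ) * X * P / (s - 1) - (bR q κ X : ℂ) * P + s * J‖
          ≤ ‖(κ:ℂ) * X * P / (s - 1) - (bR q κ X : ℂ) * P‖
            + ‖s * J‖ := norm_add_le _ _
        _ ≤ _ := by
            gcongr
            simpa using
              norm_sub_le ((κ:ℂ) * X * P / (s - 1)) ((bR q κ X : ℂ) * P)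
    have hP : ‖P‖ = X ^ (-s.re) := by
      rw [hPdef, Complex.norm_cpow_eq_rpow_re_of_pos hX0]
      norm_num
    -- term 1
    have him : s.im ≤ ‖s - 1‖ := by
      have h := Complex.abs_im_le_norm (s - 1)
      rw [Complex.sub_im, Complex.one_im, sub_zero, abs_of_pos ht0] at h
      exact h
    have hT1 : ‖(κ:ℂ) * X * P / (s - 1)‖ ≤ κ * X ^ (1 - s.re) / s.im := by
      rw [norm_div, norm_mul, norm_mul, Complex.norm_real, Complex.norm_real, Real.norm_eq_abs,
        Real.norm_eq_abs,
        abs_of_pos hκ, abs_of_pos hX0, hP]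
      have hnum : κ * X * X ^ (-s.re) = κ * X ^ (1 - s.re) := by
        rw [mul_assoc]
        congr 1
        rw [show (1:ℝ) - s.re = 1 + (-s.re) by ring, Real.rpow_add hX0, Real.rpow_one]
      rw [hnum]
      apply div_le_div_of_nonneg_left _ ht0 him
      positivity
    -- term 2
    have hT2 : ‖(bR q κ X : ℂ) * P‖ ≤ A * X ^ (θ - s.re) := by
      rw [norm_mul, Complex.norm_real, Real.norm_eq_abs, hP]
      calc |bR q κ X| * X ^ (-s.re) ≤ (A * X ^ θ) * X ^ (-s.re) :=
            mul_le_mul_of_nonneg_right (hAxiomA X hX1) (by positivity)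
        _ = A * X ^ (θ - s.re) := by
            rw [mul_assoc, ← Real.rpow_add hX0]
            ring_nf
    -- term 3
    have hNmono : Monotone fun x : ℝ => (bN q x : ℝ) := by
      intro x y hxy
      have hss : {g : ℕ →₀ ℕ | bNorm q g ≤ x} ⊆ {g : ℕ →₀ ℕ | bNorm q g ≤ y} :=
        fun g hg => le_trans hg hxy
      have := Set.ncard_le_ncard hss (hfin y)
      simp only [bN]
      exact_mod_cast this
    have hRmeas : Measurable fun x : ℝ => (bR q κ x : ℂ) := by
      apply Complex.measurable_ofReal.comp
      exact hNmono.measurable.sub (measurable_const.mul (measurable_id.sub measurable_const))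
    have hcpowC : ContinuousOn (fun x : ℝ => (x:ℂ) ^ (-s - 1)) (Set.Ioi 0) :=
      fun x hx => (Complex.continuousAt_ofReal_cpow_const x (-s - 1)
        (Or.inr (ne_of_gt hx))).continuousWithinAt
    have hcpow1 : AEStronglyMeasurable (fun x : ℝ => (x:ℂ) ^ (-s - 1))
        (volume.restrict (Set.Ioi X)) :=
      (hcpowC.mono (Set.Ioi_subset_Ioi hX0.le)).aestronglyMeasurable measurableSet_Ioi
    have hbound : ∀ᵐ x ∂(volume.restrict (Set.Ioi X)),
        ‖(bR q κ x : ℂ) * (x:ℂ) ^ (-s - 1)‖ ≤ A * x ^ (θ - s.re - 1) := by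
      filter_upwards [ae_restrict_mem measurableSet_Ioi] with x hx
      have hx1 : (1:ℝ) ≤ x := le_trans hX1 hx.le
      have hx0 : (0:ℝ) < x := lt_of_lt_of_le one_pos hx1
      rw [norm_mul, Complex.norm_real, Real.norm_eq_abs,
        Complex.norm_cpow_eq_rpow_re_of_pos hx0]
      have h2 : ((-s - 1).re) = -s.re - 1 := by simp
      rw [h2]
      calc |bR q κ x| * x ^ (-s.re - 1) ≤ (A * x ^ θ) * x ^ (-s.re - 1) :=
            mul_le_mul_of_nonneg_right (hAxiomA x hx1) (by positivity)
        _ = A * x ^ (θ - s.re - 1) := by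
            rw [mul_assoc, ← Real.rpow_add hx0]; ring_nf
    have hgi : IntegrableOn (fun x : ℝ => A * x ^ (θ - s.re - 1)) (Set.Ioi X) :=
      (integrableOn_Ioi_rpow_of_lt (by linarith) hX0).const_mul A
    have hJbound : ‖J‖ ≤ A * X ^ (θ - s.re) / (s.re - θ) := by
      rw [hJdef]
      calc ‖∫ x in Set.Ioi X, (bR q κ x : ℂ) * (x:ℂ) ^ (-s - 1)‖
          ≤ ∫ x in Set.Ioi X, A * x ^ (θ - s.re - 1) :=
            norm_integral_le_of_norm_le hgi hbound
        _ = A * ∫ x in Set.Ioi X, x ^ (θ - s.re - 1) := by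
            rw [integral_const_mul]
        _ = A * (-X ^ (θ - s.re) / (θ - s.re)) := by
            rw [integral_Ioi_rpow_of_lt (by linarith) hX0,
              show θ - s.re - 1 + 1 = θ - s.re by ring]
        _ = A * X ^ (θ - s.re) / (s.re - θ) := by
            have hq1 : -X ^ (θ - s.re) / (θ - s.re) = X ^ (θ - s.re) / (s.re - θ) := by
              rw [div_eq_div_iff (by linarith) (by linarith)]
              ring
            rw [hq1, mul_div_assoc]
    have hsabs : ‖s‖ ≤ 1 + s.im := by
      have h := Complex.norm_le_abs_re_add_abs_im s
      rw [abs_of_pos hσ0, abs_of_pos ht0] at h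
      linarith
    have hT3 : ‖s * J‖ ≤ (1 + s.im) * (A * X ^ (θ - s.re) / (s.re - θ)) := by
      rw [norm_mul]
      exact mul_le_mul hsabs hJbound (norm_nonneg J) (by linarith)
    rw [hvconv]
    have e1 : κ * X ^ (1 - s.re) / s.im ≤ 1 / (s.re - θ) * (κ * X ^ (1 - s.re) / s.im) := by
      have h1d : 1 ≤ 1 / (s.re - θ) := by
        rw [le_div_iff₀ hd]; linarith
      exact le_mul_of_one_le_left (by positivity) h1d
    have e2 : A * X ^ (θ - s.re) + (1 + s.im) * (A * X ^ (θ - s.re) / (s.re - θ))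
        ≤ 1 / (s.re - θ) * (2 * A * s.im * X ^ (θ - s.re)) := by
      have lhs_eq : A * X ^ (θ - s.re) + (1 + s.im) * (A * X ^ (θ - s.re) / (s.re - θ))
          = (A * X ^ (θ - s.re) * (s.re - θ) + (1 + s.im) * (A * X ^ (θ - s.re)))
            / (s.re - θ) := by
        field_simp
      have rhs_eq : 1 / (s.re - θ) * (2 * A * s.im * X ^ (θ - s.re))
          = (2 * A * s.im * X ^ (θ - s.re)) / (s.re - θ) := by ring
      rw [lhs_eq, rhs_eq, div_le_div_iff₀ hd hd]
      have hAv : (0:ℝ) ≤ A * X ^ (θ - s.re) := by positivity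
      nlinarith [mul_nonneg hAv (by linarith : (0:ℝ) ≤ s.im - (s.re - θ) - 1), hd]
    have expand : 1 / (s.re - θ) * (κ * X ^ (1 - s.re) / s.im + 2 * A * s.im * X ^ (θ - s.re))
        = 1 / (s.re - θ) * (κ * X ^ (1 - s.re) / s.im)
          + 1 / (s.re - θ) * (2 * A * s.im * X ^ (θ - s.re)) := by ring
    calc ‖(κ:ℂ) * X * P / (s - 1) - (bR q κ X : ℂ) * P + s * J‖
        ≤ ‖(κ:ℂ) * X * P / (s - 1)‖ + ‖(bR q κ X : ℂ) * P‖
          + ‖s * J‖ := tri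
      _ ≤ κ * X ^ (1 - s.re) / s.im + A * X ^ (θ - s.re)
          + (1 + s.im) * (A * X ^ (θ - s.re) / (s.re - θ)) := by
          exact add_le_add (add_le_add hT1 hT2) hT3
      _ ≤ 1 / (s.re - θ) * (κ * X ^ (1 - s.re) / s.im + 2 * A * s.im * X ^ (θ - s.re)) := by
          rw [expand]
          linarith
  · have hp : (0:ℝ) ≤ X ^ (1 - s.re) / s.im := by positivity
    have hr : (0:ℝ) ≤ s.im / X ^ (s.re - θ) := by positivity
    have h2 : κ * X ^ (1 - s.re) / s.im + 2 * A * s.im / X ^ (s.re - θ)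
        ≤ (2 * A + κ) * (X ^ (1 - s.re) / s.im + s.im / X ^ (s.re - θ)) := by
      have hκp := mul_nonneg hκ.le hr
      have hAp := mul_nonneg hA.le hp
      have e3 : κ * X ^ (1 - s.re) / s.im = κ * (X ^ (1 - s.re) / s.im) := by ring
      have e4 : 2 * A * s.im / X ^ (s.re - θ) = 2 * A * (s.im / X ^ (s.re - θ)) := by ring
      rw [e3, e4]
      nlinarith [hκp, hAp]
    calc 1 / (s.re - θ) * (κ * X ^ (1 - s.re) / s.im + 2 * A * s.im / X ^ (s.re - θ))
        ≤ 1 / (s.re - θ) * ((2 * A + κ) * (X ^ (1 - s.re) / s.im + s.im / X ^ (s.re - θ))) :=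
          mul_le_mul_of_nonneg_left h2 (by positivity)
      _ = (2 * A + κ) / (s.re - θ) * (X ^ (1 - s.re) / s.im + s.im / X ^ (s.re - θ)) := by
          ring
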